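/- Let ₂P₁[A,B;C;λ] := Σ_{y∈F_q} B(y)·(B⁻¹C)(1−y)·A⁻¹(1−λy). For λ ∈ F_q, λ ≠ 0, and multiplicative characters B, C: ₂P₁[ε, B; C; λ] = J(B, B⁻¹C) − C⁻¹(λ)·(B⁻¹C)(λ−1), where ε is the trivial character (with ε(0)=0) and J is the Jacobi sum. -/

import Mathlib

open scoped Classical

/-- The Jacobi sum `J(A,B) = Σ_{x∈F_q} A(x)·B(1−x)`. -/
noncomputable def jacobiS {F : Type*} [Field F] [Fintype F] (A B : MulChar F ℂ) : ℂ :=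
  ∑ x : F, A x * B (1 - x)

/-- The finite field period function
`₂P₁[A,B;C;λ] = Σ_{y∈F_q} B(y)·(B⁻¹C)(1−y)·A⁻¹(1−λy)`. -/
noncomputable def P2 {F : Type*} [Field F] [Fintype F]
    (A B C : MulChar F ℂ) (lam : F) : ℂ :=
  ∑ y : F, B y * (B⁻¹ * C) (1 - y) * A⁻¹ (1 - lam * y)

/-- Imprimitive evaluation:
`₂P₁[ε,B;C;λ] = J(B,B⁻¹C) − C⁻¹(λ)·(B⁻¹C)(λ−1)` for `λ ≠ 0`. -/
theorem P2_trivial_upper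
    {F : Type*} [Field F] [Fintype F] [DecidableEq F]
    (B C : MulChar F ℂ) (lam : F) (hlam : lam ≠ 0) :
    P2 1 B C lam = jacobiS B (B⁻¹ * C) - C⁻¹ lam * (B⁻¹ * C) (lam - 1) := by
  set g : F → ℂ := fun y => B y * (B⁻¹ * C) (1 - y) with hg
  have h1 : P2 1 B C lam = ∑ y : F, (if y = lam⁻¹ then 0 else g y) := by
    unfold P2
    refine Finset.sum_congr rfl fun y _ => ?_
    rw [inv_one]
    by_cases h : y = lam⁻¹
    · subst h
      rw [if_pos rfl]
      have : 1 - lam * lam⁻¹ = 0 := by field_simp; exact sub_self _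
      rw [this, MulChar.map_zero, mul_zero]
    · rw [if_neg h]
      have hne : 1 - lam * y ≠ 0 := by
        intro hc
        apply h
        field_simp at hc ⊢
        linear_combination -hc
      rw [MulChar.one_apply (Ne.isUnit hne), mul_one]
  have h2 : ∑ y : F, (if y = lam⁻¹ then 0 else g y) = (∑ y : F, g y) - g lam⁻¹ := by
    have : ∀ y : F, (if y = lam⁻¹ then 0 else g y)
        = g y - (if y = lam⁻¹ then g y else 0) := by
      intro y; split <;> simp
    rw [Finset.sum_congr rfl fun y _ => this y, Finset.sum_sub_distrib,
      Finset.sum_ite_eq' Finset.univ lam⁻¹ g, if_pos (Finset.mem_univ _)]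
  have h3 : g lam⁻¹ = C⁻¹ lam * (B⁻¹ * C) (lam - 1) := by
    have hx : (1 : F) - lam⁻¹ = lam⁻¹ * (lam - 1) := by field_simp
    have hB : B lam⁻¹ * B lam = 1 := by
      rw [← map_mul, inv_mul_cancel₀ hlam, MulChar.map_one]
    rw [hg]
    simp only [hx, map_mul, MulChar.inv_apply' C lam]
    rw [MulChar.mul_apply, MulChar.inv_apply' B lam⁻¹, inv_inv]
    linear_combination (C lam⁻¹ * (B⁻¹ * C) (lam - 1)) * hB
  rw [h1, h2, h3]
  rfl
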